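/- Let r : M̂ → M be a covering map with M̂ simply connected, let a, p ∈ M, x ∈ r⁻¹(a), and let γ, γ' be paths in M from a to p. Then γ and γ' are path-homotopic if and only if their lifts starting at x have the same endpoint, i.e. γ^x(1) = γ'^x(1). -/

import Mathlib

open Set Metric unitInterval

private lemma discrete_const {α β : Type*} [TopologicalSpace α] [PreconnectedSpace α]
    [TopologicalSpace β] [DiscreteTopology β] {f : α → β} (hf : Continuous f) (a b : α) :
    f a = f b := by
  have h2 := ((isClopen_discrete {f b}).preimage hf).eq_univ ⟨b, rfl⟩
  have : a ∈ Set.univ := trivial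
  rw [← h2] at this; exact this

section cov
variable {E X : Type*} [TopologicalSpace E] [TopologicalSpace X] {r : E → X}

private lemma fiber_nonempty_iff (hr : IsCoveringMap r) (q : X) : ∃ U : Set X, q ∈ U ∧ IsOpen U ∧
    ∀ q' ∈ U, (Nonempty (r ⁻¹' {q'}) ↔ Nonempty (r ⁻¹' {q})) := by
  obtain ⟨_, U, hqU, hU, _, H, hH⟩ := hr q
  have key : ∀ q₁ ∈ U, ∀ q₂ ∈ U, Nonempty (r ⁻¹' {q₁}) → Nonempty (r ⁻¹' {q₂}) := by
    rintro q₁ h₁ q₂ h₂ ⟨e, he⟩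
    have he' : e ∈ r ⁻¹' U := by
      simp only [Set.mem_preimage, Set.mem_singleton_iff] at he ⊢; rw [he]; exact h₁
    refine ⟨⟨H.symm (⟨q₂, h₂⟩, (H ⟨e, he'⟩).2), ?_⟩⟩
    have := hH (H.symm (⟨q₂, h₂⟩, (H ⟨e, he'⟩).2))
    rw [H.apply_symm_apply] at this
    exact this.symm
  exact ⟨U, hqU, hU, fun q' h' => ⟨key q' h' q hqU, key q hqU q' h'⟩⟩

private lemma fiber_nonempty_of_path (hr : IsCoveringMap r) {A : Type*} [TopologicalSpace A]
    [PreconnectedSpace A] {f : A → X} (hf : Continuous f) (a₀ : A)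
    (h0 : Nonempty (r ⁻¹' {f a₀})) : ∀ a, Nonempty (r ⁻¹' {f a}) := by
  set S : Set X := {q | Nonempty (r ⁻¹' {q})}
  have hS : IsOpen S := isOpen_iff_forall_mem_open.2 fun q hq => by
    obtain ⟨U, hqU, hU, hUq⟩ := fiber_nonempty_iff hr q
    exact ⟨U, fun q' h' => (hUq q' h').2 hq, hU, hqU⟩
  have hS' : IsOpen Sᶜ := isOpen_iff_forall_mem_open.2 fun q hq => by
    obtain ⟨U, hqU, hU, hUq⟩ := fiber_nonempty_iff hr q
    exact ⟨U, fun q' h' h'' => hq ((hUq q' h').1 h''), hU, hqU⟩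
  have hcl : IsClopen (f ⁻¹' S) := ⟨(isOpen_compl_iff.1 hS').preimage hf, hS.preimage hf⟩
  intro a
  have := hcl.eq_univ ⟨a₀, h0⟩
  have ha : a ∈ f ⁻¹' S := this ▸ Set.mem_univ a
  exact ha

private noncomputable def triv (hr : IsCoveringMap r) (q : X) [Nonempty (r ⁻¹' {q})] :
    Bundle.Trivialization (r ⁻¹' {q}) r :=
  (hr q).toTrivialization

private lemma mem_triv (hr : IsCoveringMap r) (q : X) [Nonempty (r ⁻¹' {q})] :
    q ∈ (triv hr q).baseSet :=
  (hr q).mem_toTrivialization_baseSet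

private lemma eq_symm_triv {F : Type*} [TopologicalSpace F] (T : Bundle.Trivialization F r)
    {y : E} (hy : r y ∈ T.baseSet) :
    T.toOpenPartialHomeomorph.symm (r y, (T y).2) = y := by
  have h1 : y ∈ T.source := T.mem_source.2 hy
  have h2 := T.mk_proj_snd h1
  rw [show ((r y, (T y).2) : X × F) = T y from h2]
  exact T.toOpenPartialHomeomorph.left_inv h1

private lemma coord_const {F : Type*} [TopologicalSpace F] [DiscreteTopology F]
    (T : Bundle.Trivialization F r) {A : Type*} [TopologicalSpace A] [PreconnectedSpace A]
    {g : A → E} (hg : Continuous g) (hmem : ∀ a, r (g a) ∈ T.baseSet) (a b : A) :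
    (T (g a)).2 = (T (g b)).2 := by
  have hc : Continuous fun a => (T (g a)).2 := by
    have := T.toOpenPartialHomeomorph.continuousOn.comp_continuous hg
      (fun a => T.mem_source.2 (hmem a))
    exact (Continuous.snd this :)
  exact discrete_const hc a b

private lemma eq_of_coord_eq {F : Type*} [TopologicalSpace F] (T : Bundle.Trivialization F r)
    {y y' : E} (hy : r y ∈ T.baseSet) (hproj : r y = r y') (hcoord : (T y).2 = (T y').2) :
    y = y' := by
  have hy' : r y' ∈ T.baseSet := hproj ▸ hy
  rw [← eq_symm_triv T hy, ← eq_symm_triv T hy', hproj, hcoord]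

private lemma projIcc_unit (u : unitInterval) : projIcc 0 1 zero_le_one (u:ℝ) = u := by
  apply Subtype.ext
  rw [coe_projIcc, min_eq_right u.2.2, max_eq_right u.2.1]

private lemma exists_path_lift (hr : IsCoveringMap r) {f : unitInterval → X}
    (hf : Continuous f) (x : E) (hx : r x = f 0) :
    ∃ B : unitInterval → E, Continuous B ∧ (∀ t, r (B t) = f t) ∧ B 0 = x := by
  set f' : ℝ → X := f ∘ projIcc 0 1 zero_le_one with hf'def
  have hf' : Continuous f' := hf.comp continuous_projIcc
  haveI hne : ∀ y, Nonempty (r ⁻¹' {f' y}) := fiber_nonempty_of_path hr hf' 0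
    ⟨⟨x, by show r x = f (projIcc 0 1 zero_le_one 0); rw [hx]; congr 1; exact (projIcc_unit 0).symm⟩⟩
  obtain ⟨δ, δpos, hδ⟩ := lebesgue_number_lemma_of_metric (s := Icc (0:ℝ) 1)
    (c := fun y : ℝ => f' ⁻¹' (triv hr (f' y)).baseSet) isCompact_Icc
    (fun y => (triv hr (f' y)).open_baseSet.preimage hf')
    (fun t _ => mem_iUnion.2 ⟨t, mem_triv hr (f' t)⟩)
  obtain ⟨n, hn⟩ := exists_nat_one_div_lt δpos
  set N : ℕ := n + 1 with hNdef
  have hN : (1:ℝ)/N < δ := by exact_mod_cast hn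
  have hNpos : (0:ℝ) < N := by positivity
  have key : ∀ k : ℕ, k ≤ N → ∃ B : ℝ → E, Continuous B ∧
      (∀ t, r (B t) = f' (min t ((k:ℝ)/N))) ∧ B 0 = x := by
    intro k hk
    induction k with
    | zero =>
      refine ⟨fun _ => x, continuous_const, fun t => ?_, rfl⟩
      have hproj : projIcc 0 1 zero_le_one (min t (((0:ℕ):ℝ)/N)) = 0 := by
        apply Subtype.ext
        rw [coe_projIcc]
        have h1 : min t (((0:ℕ):ℝ)/N) ≤ 0 := by simp
        have h2 : min 1 (min t (((0:ℕ):ℝ)/N)) ≤ 0 := le_trans (min_le_right _ _) h1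
        show max 0 (min 1 (min t (((0:ℕ):ℝ)/N))) = 0
        exact max_eq_left h2
      rw [hx, hf'def]
      simp only [Function.comp_apply, hproj]
    | succ k ih =>
      obtain ⟨B, hBc, hBl, hB0⟩ := ih (le_of_lt (Nat.lt_of_succ_le hk))
      have hkN : (k:ℝ) < N := by exact_mod_cast Nat.lt_of_succ_le hk
      have hk1N : ((k:ℝ)+1) ≤ N := by exact_mod_cast hk
      have hkk1 : (k:ℝ)/N ≤ ((k:ℝ)+1)/N := by gcongr; linarith
      set m : ℝ := (2*k+1)/(2*N) with hmdef
      have hmI : m ∈ Icc (0:ℝ) 1 := by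
        constructor
        · positivity
        · rw [div_le_one (by positivity)]; nlinarith
      obtain ⟨y, hy⟩ := hδ m hmI
      set T := triv hr (f' y) with hTdef
      have e1 : (2*(k:ℝ)+1)/(2*N) + 1/(2*N) = ((k:ℝ)+1)/N := by field_simp; ring
      have e2 : (2*(k:ℝ)+1)/(2*N) - 1/(2*N) = (k:ℝ)/N := by field_simp; ring
      have hlt : 1/(2*(N:ℝ)) < δ :=
        lt_trans (div_lt_div_of_pos_left one_pos hNpos (by linarith)) hN
      have hrect : ∀ t : ℝ, (k:ℝ)/N ≤ t → t ≤ ((k:ℝ)+1)/N → f' t ∈ T.baseSet := by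
        intro t h1 h2
        apply hy
        rw [mem_ball, Real.dist_eq]
        have habs : |t - m| ≤ 1/(2*N) :=
          abs_le.2 ⟨by rw [hmdef]; linarith, by rw [hmdef]; linarith⟩
        exact lt_of_le_of_lt habs hlt
      have hBk_proj : r (B ((k:ℝ)/N)) = f' ((k:ℝ)/N) := by
        rw [hBl]; congr 1; exact min_self _
      have hBk_mem : r (B ((k:ℝ)/N)) ∈ T.baseSet := by
        rw [hBk_proj]; exact hrect _ le_rfl hkk1
      set c := (T (B ((k:ℝ)/N))).2 with hcdef
      set clamp : ℝ → ℝ := fun t => min (max t ((k:ℝ)/N)) (((k:ℝ)+1)/N) with hclampdef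
      have hclamp_mem : ∀ t, f' (clamp t) ∈ T.baseSet := fun t =>
        hrect _ (le_min (le_max_right _ _) hkk1) (min_le_right _ _)
      set g : ℝ → E := fun t => T.toOpenPartialHomeomorph.symm (f' (clamp t), c) with hgdef
      have hgc : Continuous g := by
        apply T.toOpenPartialHomeomorph.continuousOn_symm.comp_continuous
        · exact (hf'.comp ((continuous_id.max continuous_const).min continuous_const)).prodMk
            continuous_const
        · intro t; exact T.mem_target.2 (hclamp_mem t)
      have hgl : ∀ t, r (g t) = f' (clamp t) := fun t =>
        T.proj_symm_apply (T.mem_target.2 (hclamp_mem t))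
      have hagree : B ((k:ℝ)/N) = g ((k:ℝ)/N) := by
        have h1 : clamp ((k:ℝ)/N) = (k:ℝ)/N := by
          rw [hclampdef]; simp only [max_self]; exact min_eq_left hkk1
        have h1s : B ((k:ℝ)/N) ∈ T.source := T.mem_source.2 hBk_mem
        have h2 : (T.toOpenPartialHomeomorph.symm (r (B ((k:ℝ)/N)), c)) = B ((k:ℝ)/N) := by
          rw [hcdef, show ((r (B ((k:ℝ)/N)), (T (B ((k:ℝ)/N))).2) : X × _) = T (B ((k:ℝ)/N))
            from T.mk_proj_snd h1s]
          exact T.toOpenPartialHomeomorph.left_inv h1s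
        rw [hgdef]
        simp only [h1]
        rw [← hBk_proj, h2]
      have hcast : ((k+1:ℕ):ℝ) = (k:ℝ)+1 := by push_cast; ring
      refine ⟨fun t => if t ≤ (k:ℝ)/N then B t else g t,
        Continuous.if_le hBc hgc continuous_id continuous_const
          (fun t ht => by rw [ht]; exact hagree), fun t => ?_, ?_⟩
      · show r (if t ≤ (k:ℝ)/N then B t else g t) = f' (min t (((k+1:ℕ):ℝ)/N))
        rw [hcast]
        by_cases h : t ≤ (k:ℝ)/N
        · rw [if_pos h, hBl]
          congr 1
          rw [min_eq_left h, min_eq_left (h.trans hkk1)]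
        · rw [if_neg h, hgl]
          congr 1
          rw [hclampdef]
          simp only []
          rw [max_eq_left (not_le.1 h).le]
      · show (if (0:ℝ) ≤ (k:ℝ)/N then B 0 else g 0) = x
        rw [if_pos (by positivity)]
        exact hB0
  obtain ⟨B, hBc, hBl, hB0⟩ := key N le_rfl
  refine ⟨fun t => B t, hBc.comp continuous_subtype_val, fun t => ?_, ?_⟩
  · show r (B (t:ℝ)) = f t
    rw [hBl]
    have h1 : min (t:ℝ) ((N:ℝ)/N) = (t:ℝ) := min_eq_left (by
      rw [div_self (ne_of_gt hNpos)]; exact t.2.2)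
    rw [h1, hf'def]
    simp only [Function.comp_apply, projIcc_val]
  · show B ((0:unitInterval):ℝ) = x
    exact hB0

/-- Local monodromy: lifts of nearby slices of `F` starting at the same point
end at the same point. -/
private lemma local_endpoint (hr : IsCoveringMap r)
    {F : unitInterval × unitInterval → X} (hF : Continuous F)
    (hF1 : ∀ s s' : unitInterval, F (s, 1) = F (s', 1)) (s₀ : unitInterval)
    [∀ z, Nonempty (r ⁻¹' {F z})] :
    ∃ ε > 0, ∀ s s' : unitInterval, dist s s₀ < ε → dist s' s₀ < ε →
      ∀ B B' : unitInterval → E, Continuous B → Continuous B' →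
      (∀ t, r (B t) = F (s, t)) → (∀ t, r (B' t) = F (s', t)) → B 0 = B' 0 → B 1 = B' 1 := by
  obtain ⟨δ, δpos, hδ⟩ := lebesgue_number_lemma_of_metric
    (s := (Set.univ : Set (unitInterval × unitInterval)))
    (c := fun z : unitInterval × unitInterval => F ⁻¹' (triv hr (F z)).baseSet) isCompact_univ
    (fun z => (triv hr (F z)).open_baseSet.preimage hF)
    (fun z _ => mem_iUnion.2 ⟨z, mem_triv hr (F z)⟩)
  obtain ⟨n, hn⟩ := exists_nat_one_div_lt δpos
  set N : ℕ := n + 1 with hNdef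
  have hN : (1:ℝ)/N < δ := by exact_mod_cast hn
  have hNpos : (0:ℝ) < N := by positivity
  have hεδ : 1/(2*(N:ℝ)) < δ :=
    lt_trans (div_lt_div_of_pos_left one_pos hNpos (by linarith)) hN
  refine ⟨1/(2*N), by positivity, ?_⟩
  set ε : ℝ := 1/(2*N) with hεdef
  -- grid points
  set τ : ℕ → unitInterval := fun k => projIcc 0 1 zero_le_one ((k:ℝ)/N) with hτdef
  have hτ : ∀ k : ℕ, k ≤ N → ((τ k : ℝ)) = (k:ℝ)/N := by
    intro k hk
    have h1 : (k:ℝ)/N ∈ Icc (0:ℝ) 1 := by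
      constructor
      · positivity
      · rw [div_le_one hNpos]; exact_mod_cast hk
    rw [hτdef]
    show (max 0 (min 1 ((k:ℝ)/N))) = (k:ℝ)/N
    rw [min_eq_right h1.2, max_eq_right h1.1]
  -- midpoints and trivializations
  have hmp : ∀ k : ℕ, k < N → (2*(k:ℝ)+1)/(2*N) ∈ Icc (0:ℝ) 1 := by
    intro k hk
    have : (k:ℝ) + 1 ≤ N := by exact_mod_cast hk
    constructor
    · positivity
    · rw [div_le_one (by positivity)]; nlinarith
  set mp : ℕ → unitInterval := fun k => projIcc 0 1 zero_le_one ((2*(k:ℝ)+1)/(2*N)) with hmpdef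
  have hY : ∀ k : ℕ, ∃ z, ball ((s₀, mp k) : unitInterval × unitInterval) δ ⊆
      F ⁻¹' (triv hr (F z)).baseSet := fun k => hδ (s₀, mp k) trivial
  choose Y hYs using hY
  set T : (k : ℕ) → Bundle.Trivialization (r ⁻¹' {F (Y k)}) r := fun k => triv hr (F (Y k)) with hTdef
  haveI hdisc : ∀ k, DiscreteTopology ↑(r ⁻¹' {F (Y k)}) := fun k => (hr (F (Y k))).1
  -- rectangle membership
  have hrect : ∀ k : ℕ, k < N → ∀ (u t : unitInterval), dist u s₀ < ε →
      (k:ℝ)/N ≤ (t:ℝ) → (t:ℝ) ≤ ((k:ℝ)+1)/N → F (u, t) ∈ (T k).baseSet := by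
    intro k hk u t hu h1 h2
    apply hYs k
    rw [mem_ball, Prod.dist_eq]
    have hmpk : ((mp k : ℝ)) = (2*(k:ℝ)+1)/(2*N) := by
      rw [hmpdef]
      show (max 0 (min 1 ((2*(k:ℝ)+1)/(2*N)))) = (2*(k:ℝ)+1)/(2*N)
      rw [min_eq_right (hmp k hk).2, max_eq_right (hmp k hk).1]
    have e1 : (2*(k:ℝ)+1)/(2*N) + 1/(2*N) = ((k:ℝ)+1)/N := by field_simp; ring
    have e2 : (2*(k:ℝ)+1)/(2*N) - 1/(2*N) = (k:ℝ)/N := by field_simp; ring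
    have habs : dist t (mp k) ≤ 1/(2*N) := by
      rw [Subtype.dist_eq, Real.dist_eq, hmpk]
      exact abs_le.2 ⟨by linarith, by linarith⟩
    refine max_lt (lt_trans hu hεδ) (lt_of_le_of_lt habs hεδ)
  -- constancy of the fiber coordinate along one rectangle
  have const_along : ∀ k : ℕ, k < N → ∀ (s₁ : unitInterval), dist s₁ s₀ < ε →
      ∀ (C : unitInterval → E), Continuous C → (∀ t, r (C t) = F (s₁, t)) →
      ((T k) (C (τ (k+1)))).2 = ((T k) (C (τ k))).2 := by
    intro k hk s₁ hs₁ C hCc hCl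
    set pth : unitInterval → unitInterval :=
      fun u => projIcc 0 1 zero_le_one (((k:ℝ) + u)/N) with hpthdef
    have hk1 : ((k:ℝ) + 1) ≤ N := by exact_mod_cast hk
    have hpth_mem : ∀ u : unitInterval, ((k:ℝ) + (u:ℝ))/N ∈ Icc (0:ℝ) 1 := by
      intro u
      have hu0 := u.2.1
      have hu1 := u.2.2
      have hk0 : (0:ℝ) ≤ k := Nat.cast_nonneg k
      constructor
      · apply div_nonneg <;> linarith
      · rw [div_le_one hNpos]; linarith
    have hpth_coe : ∀ u : unitInterval, ((pth u : ℝ)) = ((k:ℝ) + u)/N := by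
      intro u
      rw [hpthdef]
      show (max 0 (min 1 (((k:ℝ) + u)/N))) = ((k:ℝ) + u)/N
      rw [min_eq_right (hpth_mem u).2, max_eq_right (hpth_mem u).1]
    have hmem : ∀ u : unitInterval, r (C (pth u)) ∈ (T k).baseSet := by
      intro u
      rw [hCl]
      refine hrect k hk s₁ (pth u) hs₁ ?_ ?_ <;> rw [hpth_coe]
      · exact (div_le_div_iff_of_pos_right hNpos).2 (by have := u.2.1; linarith)
      · exact (div_le_div_iff_of_pos_right hNpos).2 (by have := u.2.2; linarith)
    have hpthc : Continuous pth := by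
      apply continuous_projIcc.comp
      exact (continuous_const.add continuous_subtype_val).div_const _
    have key := coord_const (T k) (hCc.comp hpthc) hmem 1 0
    have hp1 : pth 1 = τ (k+1) := by
      apply Subtype.ext
      rw [hpth_coe, hτ (k+1) hk]
      push_cast
      norm_num [Set.Icc.coe_one]
    have hp0 : pth 0 = τ k := by
      apply Subtype.ext
      rw [hpth_coe, hτ k (le_of_lt hk)]
      norm_num [Set.Icc.coe_zero]
    simp only [Function.comp_apply] at key
    rw [hp1, hp0] at key
    exact key
  -- main argument
  intro s s' hs hs' B B' hBc hB'c hBl hB'l h0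
  -- the connecting segment inside the ball
  set seg : unitInterval → unitInterval :=
    fun u => projIcc 0 1 zero_le_one ((s:ℝ) + u * ((s':ℝ) - s)) with hsegdef
  have hsegc : Continuous seg := by
    apply continuous_projIcc.comp
    exact continuous_const.add (continuous_subtype_val.mul continuous_const)
  have hseg0 : seg 0 = s := by
    rw [hsegdef]
    simp only [Set.Icc.coe_zero, zero_mul, add_zero]
    exact projIcc_unit s
  have hseg1 : seg 1 = s' := by
    rw [hsegdef]
    simp only [Set.Icc.coe_one, one_mul]
    rw [show (s:ℝ) + ((s':ℝ) - s) = (s':ℝ) by ring]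
    exact projIcc_unit s'
  have hseg_dist : ∀ u, dist (seg u) s₀ < ε := by
    intro u
    rw [Subtype.dist_eq, Real.dist_eq]
    have hu0 := u.2.1
    have hu1 := u.2.2
    set v : ℝ := (s:ℝ) + u * ((s':ℝ) - s) with hvdef
    have hvd : |v - s₀| < ε := by
      have hdss : |(s:ℝ) - s₀| < ε := by rw [← Real.dist_eq, ← Subtype.dist_eq]; exact hs
      have hdss' : |(s':ℝ) - s₀| < ε := by rw [← Real.dist_eq, ← Subtype.dist_eq]; exact hs'
      set M : ℝ := max |(s:ℝ) - s₀| |(s':ℝ) - s₀| with hMdef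
      have hM : M < ε := max_lt hdss hdss'
      calc |v - s₀| = |(1-(u:ℝ))*((s:ℝ)-s₀) + u*((s':ℝ)-s₀)| := by rw [hvdef]; ring_nf
        _ ≤ |(1-(u:ℝ))*((s:ℝ)-s₀)| + |(u:ℝ)*((s':ℝ)-s₀)| := abs_add_le _ _
        _ = (1-(u:ℝ))*|(s:ℝ)-s₀| + (u:ℝ)*|(s':ℝ)-s₀| := by
            rw [abs_mul, abs_mul, abs_of_nonneg (by linarith), abs_of_nonneg hu0]
        _ ≤ (1-(u:ℝ))*M + (u:ℝ)*M := by
            gcongr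
            · exact le_max_left _ _
            · exact le_max_right _ _
        _ = M := by ring
        _ < ε := hM
    have hL := (LipschitzWith.projIcc (a := (0:ℝ)) (b := 1) zero_le_one).dist_le_mul
      v ((s₀:ℝ))
    rw [projIcc_unit s₀] at hL
    calc dist (seg u) s₀ ≤ 1 * dist v ((s₀:ℝ)) := hL
      _ = |v - (s₀:ℝ)| := by rw [one_mul, Real.dist_eq]
      _ < ε := hvd
  -- invariant along the grid
  have main : ∀ k : ℕ, k < N → ((T k) (B (τ k))).2 = ((T k) (B' (τ k))).2 := by
    intro k
    induction k with
    | zero =>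
      intro _
      have hτ0 : τ 0 = 0 := by
        apply Subtype.ext
        rw [hτ 0 (Nat.zero_le _)]
        norm_num [Set.Icc.coe_zero]
      rw [hτ0, h0]
    | succ k ih =>
      intro hk1
      have hk : k < N := Nat.lt_of_succ_lt hk1
      have ihk := ih hk
      have hsd : dist s s₀ < ε := hs
      have hs'd : dist s' s₀ < ε := hs'
      have cB := const_along k hk s hsd B hBc hBl
      have cB' := const_along k hk s' hs'd B' hB'c hB'l
      -- common coordinate at τ (k+1) w.r.t. T k
      have hcoord : ((T k) (B (τ (k+1)))).2 = ((T k) (B' (τ (k+1)))).2 := by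
        rw [cB, cB', ihk]
      set c := ((T k) (B (τ (k+1)))).2 with hcdef
      -- membership of F (u, τ (k+1)) in both base sets
      have hτk1 : ((τ (k+1) : ℝ)) = ((k:ℝ)+1)/N := by
        rw [hτ (k+1) (le_of_lt hk1)]; push_cast; ring
      have hmemk : ∀ u : unitInterval, dist u s₀ < ε → F (u, τ (k+1)) ∈ (T k).baseSet := by
        intro u hu
        exact hrect k hk u (τ (k+1)) hu
          (by rw [hτk1]; exact (div_le_div_iff_of_pos_right hNpos).2 (by linarith))
          (by rw [hτk1])
      have hmemk1 : ∀ u : unitInterval, dist u s₀ < ε → F (u, τ (k+1)) ∈ (T (k+1)).baseSet := by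
        intro u hu
        have hcast : ((k+1:ℕ):ℝ) = (k:ℝ)+1 := by push_cast; ring
        exact hrect (k+1) hk1 u (τ (k+1)) hu
          (by rw [hτk1, hcast])
          (by rw [hτk1, hcast]; exact (div_le_div_iff_of_pos_right hNpos).2 (by linarith))
      -- the bridge
      set w : unitInterval → E :=
        fun u => (T k).toOpenPartialHomeomorph.symm (F (seg u, τ (k+1)), c) with hwdef
      have hwmem : ∀ u : unitInterval, F (seg u, τ (k+1)) ∈ (T k).baseSet :=
        fun u => hmemk (seg u) (hseg_dist u)
      have hwc : Continuous w := by
        apply (T k).toOpenPartialHomeomorph.continuousOn_symm.comp_continuous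
        · exact (hF.comp (hsegc.prodMk continuous_const)).prodMk continuous_const
        · intro u; exact (T k).mem_target.2 (hwmem u)
      have hwl : ∀ u, r (w u) = F (seg u, τ (k+1)) := fun u =>
        (T k).proj_symm_apply ((T k).mem_target.2 (hwmem u))
      have hw0 : w 0 = B (τ (k+1)) := by
        rw [hwdef]
        simp only [hseg0]
        have hb : r (B (τ (k+1))) ∈ (T k).baseSet := by
          rw [hBl]; exact hmemk s hs
        rw [hcdef, ← hBl]
        exact eq_symm_triv (T k) hb
      have hw1 : w 1 = B' (τ (k+1)) := by
        rw [hwdef]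
        simp only [hseg1]
        have hb : r (B' (τ (k+1))) ∈ (T k).baseSet := by
          rw [hB'l]; exact hmemk s' hs'
        rw [hcoord, ← hB'l]
        exact eq_symm_triv (T k) hb
      have hwm : ∀ u, r (w u) ∈ (T (k+1)).baseSet := by
        intro u
        rw [hwl]
        exact hmemk1 (seg u) (hseg_dist u)
      have key := coord_const (T (k+1)) hwc hwm 0 1
      rw [hw0, hw1] at key
      exact key
  -- conclusion
  have hNge1 : 1 ≤ N := Nat.one_le_iff_ne_zero.2 (by omega)
  have hlast : N - 1 < N := by omega
  have hfin := main (N-1) hlast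
  have hsucc : N - 1 + 1 = N := by omega
  have hτN : τ N = 1 := by
    apply Subtype.ext
    rw [hτ N le_rfl, div_self (ne_of_gt hNpos)]
    norm_num [Set.Icc.coe_one]
  have cB := const_along (N-1) hlast s hs B hBc hBl
  have cB' := const_along (N-1) hlast s' hs' B' hB'c hB'l
  rw [hsucc, hτN] at cB cB'
  have hcoord1 : ((T (N-1)) (B 1)).2 = ((T (N-1)) (B' 1)).2 := by
    rw [cB, cB', hfin]
  have hproj : r (B 1) = r (B' 1) := by rw [hBl, hB'l]; exact hF1 s s'
  have hmem1 : r (B 1) ∈ (T (N-1)).baseSet := by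
    rw [hBl]
    refine hrect (N-1) hlast s 1 hs ?_ ?_
    · rw [Set.Icc.coe_one, div_le_one hNpos]
      have : ((N:ℝ) - 1) ≤ N := by linarith
      calc ((N-1:ℕ):ℝ) = (N:ℝ) - 1 := by
            push_cast [Nat.cast_sub hNge1]; ring
        _ ≤ N := this
    · rw [Set.Icc.coe_one]
      rw [le_div_iff₀ hNpos]
      calc (1:ℝ) * N = N := one_mul _
        _ ≤ ((N-1:ℕ):ℝ) + 1 := by
            push_cast [Nat.cast_sub hNge1]; ring_nf; exact le_rfl
  exact eq_of_coord_eq (T (N-1)) hmem1 hproj hcoord1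

end cov
/-- `Γ` is a lift through `r` of the path `γ`, starting at `x` and ending at `z`. -/
def IsPathLift {E X : Type*} [TopologicalSpace E] [TopologicalSpace X]
    (r : E → X) {a b : X} (γ : Path a b) {x z : E} (Γ : Path x z) : Prop :=
  ∀ t, r (Γ t) = γ t

/-- For a covering map `r` with simply connected total space, two paths `γ, γ'` in the base from
`a` to `p` are path-homotopic iff their lifts starting at `x ∈ r⁻¹(a)` have the same endpoint:
`γ^x(1) = γ'^x(1)`. -/
theorem homotopic_iff_lifts_same_endpoint
    {E X : Type*} [TopologicalSpace E] [TopologicalSpace X]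
    (r : E → X) (hr : IsCoveringMap r) [SimplyConnectedSpace E]
    (a p : X) (x : E) (hx : r x = a) (γ γ' : Path a p) :
    ∀ (z z' : E) (Γ : Path x z) (Γ' : Path x z'),
      IsPathLift r γ Γ → IsPathLift r γ' Γ' →
      (γ.Homotopic γ' ↔ z = z') := by
  intro z z' Γ Γ' hΓ hΓ'
  constructor
  · -- homotopic → same endpoint
    intro h
    obtain ⟨Fh⟩ := h
    set F : unitInterval × unitInterval → X := fun q => Fh q with hFdef
    have hFc : Continuous F := Fh.continuous
    have hF0 : ∀ t, F (0, t) = γ t := fun t => by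
      rw [hFdef]; simpa using Fh.apply_zero t
    have hF1 : ∀ t, F (1, t) = γ' t := fun t => by
      rw [hFdef]; simpa using Fh.apply_one t
    have hFa : ∀ s, F (s, 0) = a := fun s => by
      rw [hFdef]
      have := ContinuousMap.HomotopyRel.eq_fst Fh s (Set.mem_insert (0:unitInterval) {1})
      simpa using this
    haveI hneF : ∀ q, Nonempty (r ⁻¹' {F q}) := fiber_nonempty_of_path hr hFc (0, 0)
      ⟨⟨x, by rw [Set.mem_preimage, Set.mem_singleton_iff, hFa, hx]⟩⟩
    have hFp : ∀ s s' : unitInterval, F (s, 1) = F (s', 1) := fun s s' => by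
      rw [hFdef]
      have h1 := ContinuousMap.HomotopyRel.eq_fst Fh s
        (Set.mem_insert_iff.2 (Or.inr rfl) : (1:unitInterval) ∈ ({0,1} : Set unitInterval))
      have h2 := ContinuousMap.HomotopyRel.eq_fst Fh s'
        (Set.mem_insert_iff.2 (Or.inr rfl) : (1:unitInterval) ∈ ({0,1} : Set unitInterval))
      simp only [h1, h2]
    have hlift : ∀ s : unitInterval, ∃ B : unitInterval → E, Continuous B ∧
        (∀ t, r (B t) = F (s, t)) ∧ B 0 = x := by
      intro s
      apply exists_path_lift hr (f := fun t => F (s, t)) (hFc.comp (Continuous.prodMk_right s)) x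
      rw [hFa s, hx]
    set S : Set unitInterval := {s | ∃ B : unitInterval → E, Continuous B ∧
      (∀ t, r (B t) = F (s, t)) ∧ B 0 = x ∧ B 1 = z} with hSdef
    have hopen : IsOpen S := by
      rw [Metric.isOpen_iff]
      intro s₀ hs₀
      obtain ⟨ε, εpos, hε⟩ := local_endpoint hr hFc hFp s₀
      refine ⟨ε, εpos, fun s hsball => ?_⟩
      obtain ⟨B, hBc, hBl, hB0, hB1⟩ := hs₀
      obtain ⟨B', hB'c, hB'l, hB'0⟩ := hlift s
      refine ⟨B', hB'c, hB'l, hB'0, ?_⟩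
      have heq := hε s s₀ (Metric.mem_ball.1 hsball) (by simpa using εpos)
        B' B hB'c hBc hB'l hBl (hB'0.trans hB0.symm)
      rw [heq, hB1]
    have hcopen : IsOpen Sᶜ := by
      rw [Metric.isOpen_iff]
      intro s₀ hs₀
      obtain ⟨ε, εpos, hε⟩ := local_endpoint hr hFc hFp s₀
      refine ⟨ε, εpos, fun s hsball hsS => hs₀ ?_⟩
      obtain ⟨B, hBc, hBl, hB0, hB1⟩ := hsS
      obtain ⟨B₀, hB₀c, hB₀l, hB₀0⟩ := hlift s₀
      refine ⟨B₀, hB₀c, hB₀l, hB₀0, ?_⟩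
      have heq := hε s₀ s (by simpa using εpos) (Metric.mem_ball.1 hsball)
        B₀ B hB₀c hBc hB₀l hBl (hB₀0.trans hB0.symm)
      rw [heq, hB1]
    have hclopen : IsClopen S := ⟨isOpen_compl_iff.1 hcopen, hopen⟩
    have h0S : (0:unitInterval) ∈ S :=
      ⟨fun t => Γ t, Γ.continuous, fun t => by rw [hF0]; exact hΓ t, Γ.source, Γ.target⟩
    have hSuniv : S = Set.univ := hclopen.eq_univ ⟨0, h0S⟩
    have h1S : (1:unitInterval) ∈ S := hSuniv ▸ Set.mem_univ _
    obtain ⟨B, hBc, hBl, hB0, hB1⟩ := h1S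
    have hBeq : B = ⇑Γ' :=
      hr.eq_of_comp_eq hBc Γ'.continuous
        (funext fun t => show r (B t) = r (Γ' t) by rw [hBl, hF1, hΓ' t]) 0
        (by rw [hB0, Γ'.source])
    rw [← hB1, hBeq]
    exact Γ'.target
  · -- same endpoint → homotopic
    intro h
    subst h
    subst hx
    have hpz : p = r z := by rw [← γ.target, ← hΓ 1, Γ.target]
    subst hpz
    have h1 : γ = Γ.map hr.continuous := by
      ext t
      exact (hΓ t).symm
    have h2 : γ' = Γ'.map hr.continuous := by
      ext t
      exact (hΓ' t).symm
    rw [h1, h2]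
    exact Path.Homotopic.map (SimplyConnectedSpace.paths_homotopic Γ Γ') ⟨r, hr.continuous⟩
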